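/- arXiv:2307.14095 — 4 statements merged into one kernel-verified Lean document; each statement's English description precedes it below -/
import Mathlib

section
/- Let k be a field, and let f₁ : X₁ → Y and f₂ : X₂ → Y be morphisms of schemes of finite type over k. Let U₁ ⊆ X₁ be an open subscheme, and let Ū₁ denote the schematic closure of U₁ in X₁ (the scheme-theoretic image of the open immersion U₁ → X₁). If Ū₁ is proper over Y, then the schematic closure of U₁ ×_Y X₂ in X₁ ×_Y X₂ is proper over X₂ (via the second projection). [This is the scheme-theoretic content, on special fibres of formal models, of the paper's Lemma on base change of relatively S-compact subspaces.] -/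
open AlgebraicGeometry CategoryTheory CategoryTheory.Limits

universe u

/-- `ι : Z ⟶ X` is the schematic closure (scheme-theoretic image) of `f : U ⟶ X`: it is a
closed immersion through which `f` factors, and it is the smallest such, i.e. it factors
through every closed immersion into `X` through which `f` factors. -/
def IsSchematicClosure {U X Z : Scheme.{u}} (f : U ⟶ X) (ι : Z ⟶ X) : Prop :=
  IsClosedImmersion ι ∧ (∃ g : U ⟶ Z, g ≫ ι = f) ∧
    ∀ ⦃Z' : Scheme.{u}⦄ (ι' : Z' ⟶ X), IsClosedImmersion ι' →
      (∃ g' : U ⟶ Z', g' ≫ ι' = f) → ∃ h : Z ⟶ Z', h ≫ ι' = ι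

/-- Let `k` be a field and `f₁ : X₁ ⟶ Y`, `f₂ : X₂ ⟶ Y` morphisms of
schemes of finite type over `k`. Let `U₁ ⊆ X₁` be an open subscheme, and let `Z` (with the
closed immersion `ι : Z ⟶ X₁`) be the schematic closure of `U₁` in `X₁`. If `Z` is proper
over `Y`, then the schematic closure `W` of `U₁ ×_Y X₂` in `X₁ ×_Y X₂` is proper over `X₂`
via the second projection. -/
theorem stmt_0 (k : Type u) [Field k]
    (X₁ X₂ Y : Scheme.{u})
    (sX₁ : X₁ ⟶ Spec (CommRingCat.of k)) (sX₂ : X₂ ⟶ Spec (CommRingCat.of k))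
    (sY : Y ⟶ Spec (CommRingCat.of k))
    [LocallyOfFiniteType sX₁] [QuasiCompact sX₁]
    [LocallyOfFiniteType sX₂] [QuasiCompact sX₂]
    [LocallyOfFiniteType sY] [QuasiCompact sY]
    (f₁ : X₁ ⟶ Y) (f₂ : X₂ ⟶ Y) (hf₁ : f₁ ≫ sY = sX₁) (hf₂ : f₂ ≫ sY = sX₂)
    (U₁ : X₁.Opens)
    (Z : Scheme.{u}) (ι : Z ⟶ X₁) (hZ : IsSchematicClosure U₁.ι ι)
    (hZproper : IsProper (ι ≫ f₁))
    (W : Scheme.{u}) (ιW : W ⟶ pullback f₁ f₂)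
    (hW : IsSchematicClosure
      (pullback.map (U₁.ι ≫ f₁) f₂ f₁ f₂ U₁.ι (𝟙 X₂) (𝟙 Y) (by simp) (by simp)) ιW) :
    IsProper (ιW ≫ pullback.snd f₁ f₂) := by
  obtain ⟨hιci, ⟨g, hg⟩, -⟩ := hZ
  -- the base-changed closed immersion `Z ×_Y X₂ ⟶ X₁ ×_Y X₂`
  let p : pullback (ι ≫ f₁) f₂ ⟶ pullback f₁ f₂ :=
    pullback.map (ι ≫ f₁) f₂ f₁ f₂ ι (𝟙 X₂) (𝟙 Y) (by simp) (by simp)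
  have hp : IsClosedImmersion p :=
    haveI : MorphismProperty.IsStableUnderComposition @IsClosedImmersion.{u} :=
      MorphismProperty.IsMultiplicative.toIsStableUnderComposition
    MorphismProperty.pullback_map (P := @IsClosedImmersion) hιci inferInstance rfl
      (by simp)
  -- the open part factors through it
  have hfac : (pullback.map (U₁.ι ≫ f₁) f₂ f₁ f₂ U₁.ι (𝟙 X₂) (𝟙 Y) (by simp) (by simp))
      = pullback.map (U₁.ι ≫ f₁) f₂ (ι ≫ f₁) f₂ g (𝟙 X₂) (𝟙 Y)
          (by rw [← hg]; simp) (by simp) ≫ p := by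
    apply pullback.hom_ext <;> simp only [p, pullback.map_comp, hg, Category.comp_id]
  obtain ⟨h, hh⟩ := hW.2.2 p hp ⟨_, hfac.symm⟩
  have hιW : IsClosedImmersion ιW := hW.1
  have hhp : IsClosedImmersion (h ≫ p) := hh ▸ hιW
  have hhci : IsClosedImmersion h := IsClosedImmersion.of_comp_isClosedImmersion h p
  have key : ιW ≫ pullback.snd f₁ f₂ = h ≫ pullback.snd (ι ≫ f₁) f₂ := by
    rw [← hh, Category.assoc]
    congr 1
    erw [pullback.lift_snd]; simp
  rw [key]
  have hsnd : IsProper (pullback.snd (ι ≫ f₁) f₂) :=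
    by haveI := hZproper; infer_instance
  have hhp : IsProper h := inferInstance
  exact MorphismProperty.IsStableUnderComposition.comp_mem h _ hhp hsnd
end

section
/- Let K be a field that is algebraically closed and complete with respect to a nontrivial nonarchimedean multiplicative absolute value |·|, and let R = {a ∈ K : |a| ≤ 1}. Let f = Σ_j f_j X^j be a formal power series in m variables X₁, …, X_m over K (the sum running over multi-indices j ∈ ℤ_{≥0}^m). Suppose that for every point x = (x₁, …, x_m) ∈ K^m with |x_i| < 1 for all i, the family (f_j x^j)_j is summable and |Σ_j f_j x^j| ≤ 1. Then |f_j| ≤ 1 for every multi-index j; that is, f has all coefficients in R. -/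
section StmtAux

open IsUltrametricDist Polynomial Filter

variable {K : Type*} [NontriviallyNormedField K] [CompleteSpace K]
    [IsUltrametricDist K] [IsAlgClosed K]

/-- There exist arbitrarily many "units" pairwise at distance 1. -/
lemma exists_unit_sep (n : ℕ) :
    ∃ u : Fin n → K, (∀ i, ‖u i‖ = 1) ∧ ∀ i k, i ≠ k → ‖u i - u k‖ = 1 := by
  induction n with
  | zero => exact ⟨fun i => i.elim0, fun i => i.elim0, fun i => i.elim0⟩
  | succ n ih =>
    obtain ⟨u, hu1, hu2⟩ := ih
    set Q : Polynomial K := X * ∏ i, (X - C (u i)) with hQ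
    have hQm : Q.Monic := monic_X.mul (monic_prod_of_monic _ _ fun i _ => monic_X_sub_C (u i))
    have hQd : Q.natDegree = n + 1 := by
      rw [hQ, monic_X.natDegree_mul (monic_prod_of_monic _ _ fun i _ => monic_X_sub_C (u i)),
        natDegree_X, natDegree_prod_of_monic _ _ (fun i _ => monic_X_sub_C (u i))]
      simp [natDegree_X_sub_C]
      omega
    have hQdeg : Q.degree = (n + 1 : ℕ) := by
      rw [degree_eq_natDegree hQm.ne_zero, hQd]
    have hdlt : (1 : Polynomial K).degree < Q.degree := by
      rw [degree_one, hQdeg]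
      exact_mod_cast WithBot.coe_lt_coe.mpr (Nat.succ_pos n)
    obtain ⟨α, hα⟩ := IsAlgClosed.exists_root (Q + 1) (by
      rw [degree_add_eq_left_of_degree_lt hdlt, hQdeg]
      exact_mod_cast (by simp))
    have key : α * ∏ i, (α - u i) = -1 := by
      have h0 : α * ∏ i, (α - u i) + 1 = 0 := by
        simpa [hQ, IsRoot, eval_prod] using hα
      exact eq_neg_of_add_eq_zero_left h0
    have keyn : ‖α‖ * ∏ i, ‖α - u i‖ = 1 := by
      have := congrArg norm key
      simpa [norm_prod] using this
    -- each factor and ‖α‖ are at most 1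
    have hαle : ‖α‖ ≤ 1 := by
      by_contra h
      push_neg at h
      have hfac : ∀ i, ‖α - u i‖ = ‖α‖ := by
        intro i
        have hne : ‖α‖ ≠ ‖-u i‖ := by rw [norm_neg, hu1 i]; exact ne_of_gt h
        rw [sub_eq_add_neg, norm_add_eq_max_of_norm_ne_norm hne, norm_neg, hu1 i]
        exact max_eq_left (le_of_lt h)
      rw [Finset.prod_congr rfl (fun i _ => hfac i), Finset.prod_const, Finset.card_univ,
        Fintype.card_fin, mul_comm] at keyn
      have hgt : (1:ℝ) < ‖α‖ ^ (n+1) := one_lt_pow₀ h (Nat.succ_ne_zero n)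
      rw [pow_succ] at hgt
      linarith
    have hfle : ∀ i, ‖α - u i‖ ≤ 1 := by
      intro i
      have h := norm_add_le_max α (-(u i))
      rw [← sub_eq_add_neg, norm_neg, hu1 i] at h
      exact le_trans h (by simp [hαle])
    have hprodle : ∏ i, ‖α - u i‖ ≤ 1 :=
      Finset.prod_le_one (fun i _ => norm_nonneg _) (fun i _ => hfle i)
    have hα1 : ‖α‖ = 1 := by
      have h1 : 1 ≤ ‖α‖ := by
        calc (1:ℝ) = ‖α‖ * ∏ i, ‖α - u i‖ := keyn.symm
        _ ≤ ‖α‖ * 1 := mul_le_mul_of_nonneg_left hprodle (norm_nonneg _)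
        _ = ‖α‖ := mul_one _
      exact le_antisymm hαle h1
    have hprod1 : ∏ i, ‖α - u i‖ = 1 := by rw [hα1, one_mul] at keyn; exact keyn
    have hfeq : ∀ i, ‖α - u i‖ = 1 := by
      intro i
      have h2 := Finset.mul_prod_erase Finset.univ (fun i => ‖α - u i‖) (Finset.mem_univ i)
      have h3 : ∏ k ∈ Finset.univ.erase i, ‖α - u k‖ ≤ 1 :=
        Finset.prod_le_one (fun k _ => norm_nonneg _) (fun k _ => hfle k)
      have h4 : 1 ≤ ‖α - u i‖ := by
        calc (1:ℝ) = ‖α - u i‖ * ∏ k ∈ Finset.univ.erase i, ‖α - u k‖ := by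
              rw [h2, hprod1]
        _ ≤ ‖α - u i‖ * 1 := mul_le_mul_of_nonneg_left h3 (norm_nonneg _)
        _ = ‖α - u i‖ := mul_one _
      exact le_antisymm (hfle i) h4
    set v : Fin (n+1) → K := Fin.cons α u with hv
    have hv0 : v 0 = α := rfl
    have hvs : ∀ i : Fin n, v i.succ = u i := fun i => rfl
    refine ⟨v, ?_, ?_⟩
    · intro i
      refine Fin.cases (motive := fun i => ‖v i‖ = 1) ?_ ?_ i
      · exact show ‖v 0‖ = 1 by rw [hv0]; exact hα1
      · intro k; exact show ‖v k.succ‖ = 1 by rw [hvs k]; exact hu1 k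
    · intro i k hik
      refine Fin.cases (motive := fun i => i ≠ k → ‖v i - v k‖ = 1) ?_ ?_ i hik
      · intro h0k
        refine Fin.cases (motive := fun k => (0 : Fin (n+1)) ≠ k → ‖v 0 - v k‖ = 1) ?_ ?_ k h0k
        · intro h; exact absurd rfl h
        · intro k' _; rw [hv0, hvs k']; exact hfeq k'
      · intro i' hik'
        refine Fin.cases (motive := fun k => i'.succ ≠ k → ‖v i'.succ - v k‖ = 1) ?_ ?_ k hik'
        · intro _
          rw [hvs i', hv0, norm_sub_rev]
          exact hfeq i'
        · intro k' hne
          have hne' : i' ≠ k' := fun h => hne (by rw [h])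
          rw [hvs i', hvs k']
          exact hu2 i' k' hne'
set_option linter.unusedSectionVars false

lemma exists_sep_point (c : K) (hc : c ≠ 0) (s : Finset K) :
    ∃ x : K, ‖x‖ = ‖c‖ ∧ ∀ a ∈ s, ‖c‖ ≤ ‖x - a‖ := by
  classical
  obtain ⟨u, hu1, hu2⟩ := exists_unit_sep (K := K) (s.card + 1)
  by_contra hcon
  push_neg at hcon
  have hx : ∀ i : Fin (s.card + 1), ∃ a ∈ s, ‖c * u i - a‖ < ‖c‖ := by
    intro i
    have : ‖c * u i‖ = ‖c‖ := by rw [norm_mul, hu1 i, mul_one]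
    exact hcon (c * u i) this
  choose a ha hlt using hx
  have hinj : Function.Injective a := by
    intro i k hik
    by_contra hne
    have h1 : ‖c * u i - c * u k‖ < ‖c‖ := by
      have : c * u i - c * u k = (c * u i - a i) - (c * u k - a k) := by rw [hik]; ring
      rw [this, sub_eq_add_neg]
      refine lt_of_le_of_lt (norm_add_le_max _ _) ?_
      rw [norm_neg]
      exact max_lt (hlt i) (hlt k)
    have h2 : ‖c * u i - c * u k‖ = ‖c‖ := by
      rw [← mul_sub, norm_mul, hu2 i k hne, mul_one]
    rw [h2] at h1
    exact lt_irrefl _ h1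
  have hcard := Finset.card_le_card_of_injOn (s := Finset.univ) (t := s) a (fun i _ => ha i) (hinj.injOn)
  simp at hcard

lemma multiset_prod_norm_ge (x : K) (r : ℝ) (hr : 0 ≤ r) (s : Multiset K)
    (h : ∀ a ∈ s, r ≤ ‖x - a‖) :
    r ^ Multiset.card s ≤ (s.map fun a => ‖x - a‖).prod := by
  induction s using Multiset.induction with
  | empty => simp
  | cons a t ih =>
    rw [Multiset.map_cons, Multiset.prod_cons, Multiset.card_cons, pow_succ, mul_comm]
    exact mul_le_mul (h a (Multiset.mem_cons_self a t))
      (ih fun b hb => h b (Multiset.mem_cons_of_mem hb)) (pow_nonneg hr _) (norm_nonneg _)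

lemma one_var (f : ℕ → K)
    (h : ∀ y : K, ‖y‖ < 1 → Summable (fun n => f n * y ^ n) ∧ ‖∑' n, f n * y ^ n‖ ≤ 1) :
    ∀ n, ‖f n‖ ≤ 1 := by
  classical
  intro n₀
  by_contra hn
  push_neg at hn
  obtain ⟨c₀, hc₀⟩ := NormedField.exists_one_lt_norm K
  obtain ⟨k, hk⟩ := pow_unbounded_of_one_lt (‖c₀‖ ^ n₀) hn
  have hk0 : k ≠ 0 := by
    rintro rfl
    rw [pow_zero] at hk
    exact absurd hk (not_lt.mpr (one_le_pow₀ (le_of_lt hc₀)))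
  obtain ⟨c, hck⟩ := IsAlgClosed.exists_pow_nat_eq (c₀⁻¹ : K) (Nat.pos_of_ne_zero hk0)
  have hc₀0 : c₀ ≠ 0 := by
    intro h0; rw [h0, norm_zero] at hc₀; linarith
  have hcn : ‖c‖ ^ k = ‖c₀‖⁻¹ := by rw [← norm_pow, hck, norm_inv]
  have hcpos : 0 < ‖c‖ := by
    rw [norm_pos_iff]
    intro h0
    rw [h0, zero_pow hk0] at hck
    exact hc₀0 (inv_eq_zero.mp hck.symm)
  have hc1 : ‖c‖ < 1 := by
    have h1 : ‖c‖ ^ k < 1 := by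
      rw [hcn]
      exact inv_lt_one_of_one_lt₀ hc₀
    exact (pow_lt_one_iff_of_nonneg (norm_nonneg c) hk0).mp h1
  have hcne : c ≠ 0 := norm_pos_iff.mp hcpos
  set r := ‖c‖ with hr
  -- the maximal term exceeds 1
  have hM0 : 1 < ‖f n₀‖ * r ^ n₀ := by
    have hkey : (‖f n₀‖ * r ^ n₀) ^ k = ‖f n₀‖ ^ k * (‖c₀‖ ^ n₀)⁻¹ := by
      rw [mul_pow, ← pow_mul, mul_comm n₀ k, pow_mul, hcn, inv_pow]
    have h1 : 1 < (‖f n₀‖ * r ^ n₀) ^ k := by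
      rw [hkey]
      have hCpos : (0:ℝ) < ‖c₀‖ ^ n₀ := by positivity
      calc (1:ℝ) = (‖c₀‖ ^ n₀) * (‖c₀‖ ^ n₀)⁻¹ := (mul_inv_cancel₀ (ne_of_gt hCpos)).symm
      _ < ‖f n₀‖ ^ k * (‖c₀‖ ^ n₀)⁻¹ := mul_lt_mul_of_pos_right hk (inv_pos.mpr hCpos)
    exact (one_lt_pow_iff_of_nonneg (by positivity) hk0).mp h1
  set a : ℕ → ℝ := fun n => ‖f n‖ * r ^ n with ha
  have hanorm : ∀ n, a n = ‖f n * c ^ n‖ := by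
    intro n; rw [ha]; simp [norm_mul, norm_pow, hr]
  have htend : Filter.Tendsto a Filter.cofinite (nhds 0) := by
    have h1 := (h c hc1).1.tendsto_cofinite_zero
    have h2 := h1.norm
    rw [norm_zero] at h2
    exact h2.congr (fun n => (hanorm n).symm)
  have hfin : {n : ℕ | 1 ≤ a n}.Finite := by
    have h1 : ∀ᶠ n in Filter.cofinite, a n < 1 := by
      have := htend.eventually (eventually_lt_nhds (by norm_num : (0:ℝ) < 1))
      exact this
    have := Filter.eventually_cofinite.mp h1
    refine this.subset ?_
    intro n hn1
    simp only [Set.mem_setOf_eq] at hn1 ⊢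
    linarith
  set T : Finset ℕ := hfin.toFinset with hT
  have hn₀T : n₀ ∈ T := by
    rw [hT, Set.Finite.mem_toFinset]
    exact le_of_lt hM0
  have hTne : T.Nonempty := ⟨n₀, hn₀T⟩
  set M : ℝ := T.sup' hTne a with hM
  have hMa : 1 < M := lt_of_lt_of_le hM0 (Finset.le_sup' a hn₀T)
  have hub : ∀ n, a n ≤ M := by
    intro n
    by_cases hnT : n ∈ T
    · exact Finset.le_sup' a hnT
    · rw [hT, Set.Finite.mem_toFinset] at hnT
      simp only [Set.mem_setOf_eq, not_le] at hnT
      linarith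
  obtain ⟨nmax, hnmaxT, hnmax⟩ := Finset.exists_mem_eq_sup' hTne a
  set S : Finset ℕ := T.filter (fun n => a n = M) with hS
  have hSne : S.Nonempty := ⟨nmax, by rw [hS, Finset.mem_filter]; exact ⟨hnmaxT, hnmax.symm⟩⟩
  set N : ℕ := S.max' hSne with hN
  have hNS : N ∈ S := S.max'_mem hSne
  have haN : a N = M := (Finset.mem_filter.mp hNS).2
  have hlt : ∀ n, N < n → a n < M := by
    intro n hn'
    by_cases hnT : n ∈ T
    · rcases lt_or_eq_of_le (Finset.le_sup' a hnT) with h1 | h1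
      · exact h1
      · exfalso
        have : n ∈ S := by rw [hS, Finset.mem_filter]; exact ⟨hnT, h1⟩
        exact absurd (S.le_max' n this) (not_le.mpr hn')
    · rw [hT, Set.Finite.mem_toFinset] at hnT
      simp only [Set.mem_setOf_eq, not_le] at hnT
      linarith
  -- tail bound
  set B : ℝ := (insert (1:ℝ) ((T.filter fun n => N < n).image a)).max'
    ⟨1, Finset.mem_insert_self _ _⟩ with hB
  have hB1 : 1 ≤ B := Finset.le_max' _ _ (Finset.mem_insert_self _ _)
  have hBM : B < M := by
    rw [hB]
    refine (Finset.max'_lt_iff _ _).mpr ?_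
    intro y hy
    rcases Finset.mem_insert.mp hy with h1 | h1
    · rw [h1]; exact hMa
    · obtain ⟨n, hn1, hn2⟩ := Finset.mem_image.mp h1
      rw [← hn2]
      exact hlt n (Finset.mem_filter.mp hn1).2
  have htail : ∀ n, N < n → a n ≤ B := by
    intro n hn'
    by_cases hnT : n ∈ T
    · refine Finset.le_max' _ _ ?_
      refine Finset.mem_insert_of_mem (Finset.mem_image.mpr ⟨n, ?_, rfl⟩)
      rw [Finset.mem_filter]; exact ⟨hnT, hn'⟩
    · rw [hT, Set.Finite.mem_toFinset] at hnT
      simp only [Set.mem_setOf_eq, not_le] at hnT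
      linarith
  -- the polynomial
  have hfN0 : f N ≠ 0 := by
    intro h0
    rw [ha] at haN
    simp only [h0, norm_zero, zero_mul] at haN
    linarith
  set g : Polynomial K := ∑ n ∈ Finset.range (N+1), Polynomial.C (f n) * Polynomial.X ^ n with hg
  have hgnd : g.natDegree ≤ N := by
    refine Polynomial.natDegree_sum_le_of_forall_le _ _ ?_
    intro n hn'
    exact le_trans (Polynomial.natDegree_C_mul_X_pow_le (f n) n)
      (Nat.lt_succ_iff.mp (Finset.mem_range.mp hn'))
  have hgcoeff : g.coeff N = f N := by
    rw [hg, Polynomial.finset_sum_coeff]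
    simp only [Polynomial.coeff_C_mul, Polynomial.coeff_X_pow]
    rw [Finset.sum_congr rfl (fun n _ => by rw [mul_ite, mul_one, mul_zero])]
    rw [Finset.sum_ite_eq (Finset.range (N+1)) N f]
    simp
  have hgdeg : g.natDegree = N :=
    le_antisymm hgnd (Polynomial.le_natDegree_of_ne_zero (by rw [hgcoeff]; exact hfN0))
  have hglead : g.leadingCoeff = f N := by
    rw [Polynomial.leadingCoeff, hgdeg, hgcoeff]
  have hsplits : Polynomial.Splits g := IsAlgClosed.splits g
  have hcard : Multiset.card g.roots = N := by
    rw [Polynomial.splits_iff_card_roots.mp hsplits, hgdeg]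
  obtain ⟨x, hxnorm, hxsep⟩ := exists_sep_point c hcne g.roots.toFinset
  have hxroots : ∀ ρ ∈ g.roots, r ≤ ‖x - ρ‖ := fun ρ hρ =>
    hxsep ρ (Multiset.mem_toFinset.mpr hρ)
  have heval : g.eval x = ∑ n ∈ Finset.range (N+1), f n * x ^ n := by
    rw [hg]
    simp [Polynomial.eval_finset_sum]
  have hgx : M ≤ ‖g.eval x‖ := by
    have hfact := hsplits.eq_prod_roots
    have : g.eval x = f N * ((g.roots.map fun ρ => x - ρ).prod) := by
      conv_lhs => rw [hfact]
      rw [Polynomial.eval_mul, Polynomial.eval_C, hglead, Polynomial.eval_multiset_prod,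
        Multiset.map_map]
      simp
    rw [this, norm_mul]
    have hnp : ‖(g.roots.map fun ρ => x - ρ).prod‖ = ((g.roots.map fun ρ => x - ρ).map norm).prod := by
      exact map_multiset_prod (normHom.toMonoidHom : K →* ℝ) _
    rw [hnp, Multiset.map_map]
    have hge : r ^ N ≤ ((g.roots.map fun ρ => norm (x - ρ))).prod := by
      have := multiset_prod_norm_ge x r (le_of_lt hcpos) g.roots hxroots
      rw [hcard] at this
      exact this
    calc M = ‖f N‖ * r ^ N := by rw [← haN, ha]
    _ ≤ ‖f N‖ * ((g.roots.map fun ρ => norm (x - ρ))).prod :=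
        mul_le_mul_of_nonneg_left hge (norm_nonneg _)
    _ = _ := by norm_num [Function.comp]
  -- now evaluate the series at x
  have hx1 : ‖x‖ < 1 := by rw [hxnorm]; exact hc1
  obtain ⟨hsum, hbound⟩ := h x hx1
  have hsplit := Summable.sum_add_tsum_nat_add (f := fun n => f n * x ^ n) (N+1) hsum
  have htailnorm : ‖∑' i : ℕ, f (i + (N+1)) * x ^ (i + (N+1))‖ ≤ B := by
    refine norm_tsum_le_of_forall_le_of_nonneg (le_trans zero_le_one hB1) ?_
    intro i
    have h1 : ‖f (i + (N+1)) * x ^ (i + (N+1))‖ = a (i + (N+1)) := by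
      rw [ha, norm_mul, norm_pow, hxnorm]
    rw [h1]
    exact htail _ (by omega)
  have hheadnorm : M ≤ ‖∑ n ∈ Finset.range (N+1), f n * x ^ n‖ := by
    rw [← heval]; exact hgx
  have hne2 : ‖∑ n ∈ Finset.range (N+1), f n * x ^ n‖ ≠ ‖∑' i : ℕ, f (i + (N+1)) * x ^ (i + (N+1))‖ := by
    intro heq
    rw [← heq] at htailnorm
    linarith
  have hfinal : ‖∑' n : ℕ, f n * x ^ n‖ = ‖∑ n ∈ Finset.range (N+1), f n * x ^ n‖ := by
    rw [← hsplit, norm_add_eq_max_of_norm_ne_norm hne2]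
    exact max_eq_left (by linarith [le_trans htailnorm (le_of_lt hBM), hheadnorm])
  rw [hfinal] at hbound
  linarith

lemma stmt_aux : ∀ (m : ℕ) (f : (Fin m → ℕ) → K),
    (∀ x : Fin m → K, (∀ i, ‖x i‖ < 1) →
      Summable (fun j : Fin m → ℕ => f j * ∏ i, x i ^ j i) ∧
        ‖∑' j : Fin m → ℕ, f j * ∏ i, x i ^ j i‖ ≤ 1) →
    ∀ j, ‖f j‖ ≤ 1 := by
  intro m
  induction m with
  | zero =>
    intro f hf j
    have h0 := hf 0 (fun i => i.elim0)
    have heq : ∑' j : Fin 0 → ℕ, f j * ∏ i, (0 : Fin 0 → K) i ^ j i = f j := by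
      rw [tsum_eq_single j (fun b hb => absurd (Subsingleton.elim b j) hb)]
      simp
    calc ‖f j‖ = ‖∑' j : Fin 0 → ℕ, f j * ∏ i, (0 : Fin 0 → K) i ^ j i‖ := by rw [heq]
    _ ≤ 1 := h0.2
  | succ m ih =>
    intro f hf j
    obtain ⟨y₀, hy₀pos, hy₀lt⟩ := NormedField.exists_norm_lt_one K
    have hy₀ne : y₀ ≠ 0 := norm_pos_iff.mp hy₀pos
    have hconsmem : ∀ (y : K), ‖y‖ < 1 → ∀ (x' : Fin m → K), (∀ i, ‖x' i‖ < 1) →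
        ∀ i : Fin (m+1), ‖(Fin.cons y x' : Fin (m+1) → K) i‖ < 1 := by
      intro y hy x' hx' i
      refine Fin.cases (motive := fun i => ‖(Fin.cons y x' : Fin (m+1) → K) i‖ < 1) ?_ ?_ i
      · simpa using hy
      · intro k; simpa using hx' k
    have hprodcons : ∀ (y : K) (x' : Fin m → K) (n : ℕ) (j' : Fin m → ℕ),
        (∏ i : Fin (m+1), (Fin.cons y x' : Fin (m+1) → K) i ^ (Fin.cons n j' : Fin (m+1) → ℕ) i)
          = y ^ n * ∏ i : Fin m, x' i ^ j' i := by
      intro y x' n j'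
      rw [Fin.prod_univ_succ]
      simp
    have claim1 : ∀ (x' : Fin m → K), (∀ i, ‖x' i‖ < 1) → ∀ n : ℕ,
        Summable (fun j' : Fin m → ℕ => f (Fin.cons n j') * ∏ i, x' i ^ j' i) := by
      intro x' hx' n
      have H := (hf (Fin.cons y₀ x') (hconsmem y₀ hy₀lt x' hx')).1
      have hinj : Function.Injective (fun j' : Fin m → ℕ => (Fin.cons n j' : Fin (m+1) → ℕ)) := by
        intro a b hab
        have h2 := congrArg Fin.tail hab
        simpa [Fin.tail_cons] using h2
      have H2 := (H.comp_injective hinj).mul_left ((y₀ ^ n)⁻¹)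
      refine H2.congr ?_
      intro j'
      simp only [Function.comp]
      rw [hprodcons]
      field_simp
    have claim2 : ∀ (x' : Fin m → K), (∀ i, ‖x' i‖ < 1) → ∀ n : ℕ,
        ‖∑' j' : Fin m → ℕ, f (Fin.cons n j') * ∏ i, x' i ^ j' i‖ ≤ 1 := by
      intro x' hx'
      set F : ℕ → K := fun n => ∑' j' : Fin m → ℕ, f (Fin.cons n j') * ∏ i, x' i ^ j' i with hF
      have hFh : ∀ y : K, ‖y‖ < 1 →
          Summable (fun n => F n * y ^ n) ∧ ‖∑' n : ℕ, F n * y ^ n‖ ≤ 1 := by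
        intro y hy
        have hmem := hconsmem y hy x' hx'
        obtain ⟨Hs, Hb⟩ := hf (Fin.cons y x') hmem
        set e : (ℕ × (Fin m → ℕ)) ≃ (Fin (m+1) → ℕ) := Fin.consEquiv (fun _ => ℕ) with he
        have hGs : HasSum
            (fun p : ℕ × (Fin m → ℕ) => f (Fin.cons p.1 p.2) *
              ∏ i : Fin (m+1), (Fin.cons y x' : Fin (m+1) → K) i ^ (Fin.cons p.1 p.2 : Fin (m+1) → ℕ) i)
            (∑' j : Fin (m+1) → ℕ, f j * ∏ i, (Fin.cons y x' : Fin (m+1) → K) i ^ j i) := by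
          have h1 := Hs.hasSum
          rw [← e.hasSum_iff] at h1
          exact h1
        have hfib : ∀ n : ℕ, HasSum
            (fun j' : Fin m → ℕ => f (Fin.cons n j') *
              ∏ i : Fin (m+1), (Fin.cons y x' : Fin (m+1) → K) i ^ (Fin.cons n j' : Fin (m+1) → ℕ) i)
            (F n * y ^ n) := by
          intro n
          have h1 := ((claim1 x' hx' n).hasSum.mul_right (y ^ n))
          have heq : (fun j' : Fin m → ℕ => f (Fin.cons n j') *
              ∏ i : Fin (m+1), (Fin.cons y x' : Fin (m+1) → K) i ^ (Fin.cons n j' : Fin (m+1) → ℕ) i)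
              = fun j' : Fin m → ℕ => (f (Fin.cons n j') * ∏ i : Fin m, x' i ^ j' i) * y ^ n := by
            funext j'
            rw [hprodcons]
            ring
          rw [heq]
          have hFn : F n * y ^ n = (∑' j' : Fin m → ℕ, f (Fin.cons n j') * ∏ i, x' i ^ j' i) * y ^ n := rfl
          rw [hFn]
          exact h1
        have hprod := HasSum.prod_fiberwise hGs hfib
        exact ⟨hprod.summable, by rw [hprod.tsum_eq]; exact Hb⟩
      exact one_var F hFh
    have hmain := ih (fun j' => f (Fin.cons (j 0) j'))
      (fun x' hx' => ⟨claim1 x' hx' (j 0), claim2 x' hx' (j 0)⟩) (Fin.tail j)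
    simpa [Fin.cons_self_tail] using hmain

end StmtAux

/-- Let `K` be an algebraically closed field, complete with respect to a
nontrivial nonarchimedean multiplicative absolute value. If a formal power series
`f = Σ_j f_j X^j` in `m` variables over `K` is summable at every point `x` of the open unit
polydisc and the values satisfy `|Σ_j f_j x^j| ≤ 1`, then all coefficients satisfy
`|f_j| ≤ 1`. -/
theorem stmt_2 {K : Type*} [NontriviallyNormedField K] [CompleteSpace K]
    [IsUltrametricDist K] [IsAlgClosed K] (m : ℕ) (f : (Fin m → ℕ) → K)
    (hf : ∀ x : Fin m → K, (∀ i, ‖x i‖ < 1) →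
      Summable (fun j : Fin m → ℕ => f j * ∏ i, x i ^ j i) ∧
        ‖∑' j : Fin m → ℕ, f j * ∏ i, x i ^ j i‖ ≤ 1) :
    ∀ j : Fin m → ℕ, ‖f j‖ ≤ 1 := by
  exact stmt_aux m f hf
end

section
/- Let K be a field with a nonarchimedean multiplicative absolute value |·|, let ε be a real number with 0 < ε < 1, and let λ ≥ 1 be an integer. Let v : ℤ → K and w : ℤ × ℤ → K be families of elements such that: |v(j)| ≤ 1 for all j ∈ ℤ; |w(j,k)| ≤ ε^{|j|+|k|} for all j, k ∈ ℤ; and |v(−j) − w(j,j)| ≤ ε^{2λ} for all j ∈ ℤ. Then |v(j)| ≤ ε^{2|j|} for all j ∈ ℤ with |j| ≤ λ, and |v(j)| ≤ ε^{2λ} for all j ∈ ℤ with |j| ≥ λ. [This is the coefficient estimate at the heart of the paper's key lemma producing, from a function on the unit annulus, an approximating function that extends to a larger annulus.] -/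
/-- Let `K` be a field with a nonarchimedean multiplicative absolute value,
`0 < ε < 1` and `λ ≥ 1` an integer. If `|v(j)| ≤ 1` for all `j`, `|w(j,k)| ≤ ε^(|j|+|k|)`
for all `j, k`, and `|v(−j) − w(j,j)| ≤ ε^(2λ)` for all `j`, then `|v(j)| ≤ ε^(2|j|)`
for `|j| ≤ λ` and `|v(j)| ≤ ε^(2λ)` for `|j| ≥ λ`. -/
theorem stmt_9 {K : Type*} [NormedField K] [IsUltrametricDist K]
    (ε : ℝ) (hε0 : 0 < ε) (hε1 : ε < 1) (lam : ℕ) (hlam : 1 ≤ lam)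
    (v : ℤ → K) (w : ℤ × ℤ → K)
    (hv : ∀ j : ℤ, ‖v j‖ ≤ 1)
    (hw : ∀ j k : ℤ, ‖w (j, k)‖ ≤ ε ^ (j.natAbs + k.natAbs))
    (hvw : ∀ j : ℤ, ‖v (-j) - w (j, j)‖ ≤ ε ^ (2 * lam)) :
    (∀ j : ℤ, j.natAbs ≤ lam → ‖v j‖ ≤ ε ^ (2 * j.natAbs)) ∧
      (∀ j : ℤ, lam ≤ j.natAbs → ‖v j‖ ≤ ε ^ (2 * lam)) := by
  have key : ∀ j : ℤ, ‖v j‖ ≤ max (ε ^ (2 * lam)) (ε ^ (2 * j.natAbs)) := by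
    intro j
    have h1 := hvw (-j)
    rw [neg_neg] at h1
    have h2 := hw (-j) (-j)
    have hdecomp : v j = (v j - w (-j, -j)) + w (-j, -j) := by ring
    calc ‖v j‖ = ‖(v j - w (-j, -j)) + w (-j, -j)‖ := by rw [← hdecomp]
      _ ≤ max ‖v j - w (-j, -j)‖ ‖w (-j, -j)‖ :=
          IsUltrametricDist.norm_add_le_max _ _
      _ ≤ max (ε ^ (2 * lam)) (ε ^ (2 * j.natAbs)) := by
          apply max_le_max h1
          simpa [Int.natAbs_neg, two_mul] using h2
  constructor
  · intro j hj
    refine (key j).trans (max_le ?_ le_rfl)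
    exact pow_le_pow_of_le_one hε0.le hε1.le (by omega)
  · intro j hj
    refine (key j).trans (max_le le_rfl ?_)
    exact pow_le_pow_of_le_one hε0.le hε1.le (by omega)
end

section
/- Let K be a field equipped with a multiplicative absolute value |·| : K^× → ℝ_{>0} (a group homomorphism), let ε be a real number with 0 < ε < 1, and let π ∈ K^× satisfy |π| = ε. Let G be a commutative group, let A = {x ∈ K^× : ε ≤ |x| ≤ ε^{-1}}, and let ψ : A → G be a map satisfying ψ(x)·ψ(y) = ψ(xy) for all x, y ∈ A with xy ∈ A. Then there exists a unique group homomorphism φ : K^× → G such that φ(x) = ψ(x) for all x ∈ A. [This is the gluing step concluding the proof of the main theorem: a morphism on the annulus satisfying the homomorphism identity whenever it makes sense extends uniquely to a homomorphism on the whole multiplicative group.] -/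
private lemma grp_aux1 {G : Type*} [CommGroup G] (u w q : G) (i j : ℤ) :
    (u * w) * q ^ (-(i + j)) = (u * q ^ (-i)) * (w * q ^ (-j)) := by
  rw [neg_add, zpow_add, mul_mul_mul_comm]

private lemma grp_aux2 {G : Type*} [CommGroup G] (u w q : G) (i j : ℤ) :
    (u * w) * q ^ (-(i + j - 1)) = (q * u * q ^ (-i)) * (w * q ^ (-j)) := by
  have h : -(i + j - 1) = 1 + -i + -j := by ring
  rw [h, zpow_add, zpow_add, zpow_one]
  simp only [mul_comm, mul_left_comm, mul_assoc]

/-- Let `K` be a field with a multiplicative absolute value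
`v : Kˣ → ℝ_{>0}`, let `0 < ε < 1` and `π ∈ Kˣ` with `v π = ε`. Let `G` be a commutative
group, `A = {x ∈ Kˣ : ε ≤ v x ≤ ε⁻¹}` the annulus, and `ψ : A → G` a map satisfying
`ψ(x)·ψ(y) = ψ(xy)` whenever `x, y, xy ∈ A`. Then `ψ` extends uniquely to a group
homomorphism `φ : Kˣ → G`. -/
theorem stmt_11 {K : Type*} [Field K] {G : Type*} [CommGroup G]
    (v : Kˣ → ℝ) (hv_pos : ∀ x, 0 < v x) (hv_mul : ∀ x y, v (x * y) = v x * v y)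
    (ε : ℝ) (hε0 : 0 < ε) (hε1 : ε < 1) (π : Kˣ) (hπ : v π = ε)
    (A : Set Kˣ) (hA : A = {x : Kˣ | ε ≤ v x ∧ v x ≤ ε⁻¹})
    (ψ : A → G)
    (hψ : ∀ (x y : Kˣ) (hx : x ∈ A) (hy : y ∈ A) (hxy : x * y ∈ A),
      ψ ⟨x, hx⟩ * ψ ⟨y, hy⟩ = ψ ⟨x * y, hxy⟩) :
    ∃! φ : Kˣ →* G, ∀ (x : Kˣ) (hx : x ∈ A), φ x = ψ ⟨x, hx⟩ := by
  have hεinv : 1 < ε⁻¹ := (one_lt_inv₀ hε0).2 hε1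
  have hεle : ε ≤ ε⁻¹ := le_of_lt (lt_trans hε1 hεinv)
  have hv1 : v 1 = 1 := by
    have h := hv_mul 1 1
    rw [one_mul] at h
    have h2 := hv_pos 1
    nlinarith
  -- package v as a hom to units
  set V : Kˣ →* ℝ := { toFun := v, map_one' := hv1, map_mul' := hv_mul } with hV
  set Vu : Kˣ →* ℝˣ := V.toHomUnits with hVu
  have hVuval : ∀ x : Kˣ, ((Vu x : ℝˣ) : ℝ) = v x := fun x => rfl
  have hvz : ∀ (n : ℤ) (x : Kˣ), v (π ^ n * x) = ε ^ n * v x := by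
    intro n x
    have h : Vu (π ^ n * x) = (Vu π) ^ n * Vu x := by rw [map_mul, map_zpow]
    have h2 := congrArg (Units.val) h
    rw [Units.val_mul, Units.val_zpow_eq_zpow_val, hVuval, hVuval, hVuval, hπ] at h2
    exact h2
  have hmemA : ∀ x : Kˣ, x ∈ A ↔ ε ≤ v x ∧ v x ≤ ε⁻¹ := by
    intro x; rw [hA]; rfl
  have hπA : π ∈ A := (hmemA π).2 ⟨by rw [hπ], by rw [hπ]; exact hεle⟩
  set p : G := ψ ⟨π, hπA⟩ with hp
  -- cast lemma
  have ψc : ∀ (a b : Kˣ) (ha : a ∈ A) (hb : b ∈ A), a = b → ψ ⟨a, ha⟩ = ψ ⟨b, hb⟩ := by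
    intro a b ha hb h; subst h; rfl
  -- antitone zpow
  have hzmono : ∀ {i j : ℤ}, i ≤ j → ε ^ j ≤ ε ^ i :=
    fun h => zpow_le_zpow_right_of_le_one₀ hε0 hε1.le h
  have hzpos : ∀ i : ℤ, 0 < ε ^ i := fun i => zpow_pos hε0 i
  -- intermediate membership
  have hbetween : ∀ (x : Kˣ) (m k n : ℤ), m ≤ k → k ≤ n →
      π ^ m * x ∈ A → π ^ n * x ∈ A → π ^ k * x ∈ A := by
    intro x m k n hmk hkn hm hn
    obtain ⟨hm1, hm2⟩ := (hmemA _).1 hm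
    obtain ⟨hn1, hn2⟩ := (hmemA _).1 hn
    rw [hvz] at hm1 hm2 hn1 hn2
    refine (hmemA _).2 ?_
    rw [hvz]
    have hx := hv_pos x
    constructor
    · calc ε ≤ ε ^ n * v x := hn1
        _ ≤ ε ^ k * v x := by
            have := hzmono hkn; nlinarith
    · calc ε ^ k * v x ≤ ε ^ m * v x := by
            have := hzmono hmk; nlinarith
        _ ≤ ε⁻¹ := hm2
  -- the key independence lemma
  have key : ∀ (x : Kˣ) (m n : ℤ), m ≤ n → ∀ (hm : π ^ m * x ∈ A) (hn : π ^ n * x ∈ A),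
      ψ ⟨π ^ n * x, hn⟩ * p ^ (-n) = ψ ⟨π ^ m * x, hm⟩ * p ^ (-m) := by
    intro x m n hmn
    refine Int.le_induction
      (motive := fun k _ => ∀ (hm : π ^ m * x ∈ A) (hk : π ^ k * x ∈ A),
        ψ ⟨π ^ k * x, hk⟩ * p ^ (-k) = ψ ⟨π ^ m * x, hm⟩ * p ^ (-m)) ?_ ?_ n hmn
    · intro hm hn; rfl
    · intro n hmn ih hm hsn
      have hn : π ^ n * x ∈ A := hbetween x m n (n + 1) hmn (by linarith) hm hsn
      have heq : π * (π ^ n * x) = π ^ (n + 1) * x := by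
        rw [zpow_add_one, ← mul_assoc, mul_comm (π ^ n) π]
      have hmemb : π * (π ^ n * x) ∈ A := by rw [heq]; exact hsn
      have step : ψ ⟨π ^ (n + 1) * x, hsn⟩ = p * ψ ⟨π ^ n * x, hn⟩ := by
        rw [hp, hψ π (π ^ n * x) hπA hn hmemb]
        exact (ψc _ _ _ _ heq).symm
      rw [step, ← ih hm hn, mul_comm p, mul_assoc]
      congr 1
      rw [mul_comm, ← zpow_add_one]
      norm_num
  have keyall : ∀ (x : Kˣ) (m n : ℤ) (hm : π ^ m * x ∈ A) (hn : π ^ n * x ∈ A),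
      ψ ⟨π ^ m * x, hm⟩ * p ^ (-m) = ψ ⟨π ^ n * x, hn⟩ * p ^ (-n) := by
    intro x m n hm hn
    rcases le_total m n with h | h
    · exact (key x m n h hm hn).symm
    · exact key x n m h hn hm
  -- existence of normalizing exponent
  have hex : ∀ x : Kˣ, ∃ n : ℤ, (π ^ n * x ∈ A) ∧ v (π ^ n * x) ≤ 1 := by
    intro x
    obtain ⟨n, hn1, hn2⟩ := exists_mem_Ioc_zpow (hv_pos x) hεinv
    have h1 : ε⁻¹ ^ n = ε ^ (-n) := by rw [inv_zpow, ← zpow_neg]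
    have h1' : ε⁻¹ ^ (n + 1) = ε ^ (-(n + 1)) := by rw [inv_zpow, ← zpow_neg]
    rw [h1] at hn1
    rw [h1'] at hn2
    have e1 : ε ^ (n + 1) * ε ^ (-n) = ε := by
      rw [← zpow_add₀ hε0.ne', show n + 1 + -n = 1 by ring, zpow_one]
    have e2 : ε ^ (n + 1) * ε ^ (-(n + 1)) = 1 := by
      rw [← zpow_add₀ hε0.ne', show n + 1 + -(n + 1) = 0 by ring, zpow_zero]
    have hub : v (π ^ (n + 1) * x) ≤ 1 := by
      rw [hvz]
      calc ε ^ (n + 1) * v x ≤ ε ^ (n + 1) * ε ^ (-(n + 1)) := by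
            have := hzpos (n + 1); nlinarith
        _ = 1 := e2
    have hlb : ε ≤ v (π ^ (n + 1) * x) := by
      rw [hvz]
      calc ε = ε ^ (n + 1) * ε ^ (-n) := e1.symm
        _ ≤ ε ^ (n + 1) * v x := by have := hzpos (n + 1); nlinarith
    exact ⟨n + 1, (hmemA _).2 ⟨hlb, le_trans hub hεinv.le⟩, hub⟩
  -- the normalizing exponent
  set N : Kˣ → ℤ := fun x => (hex x).choose with hNdef
  have hN1 : ∀ x : Kˣ, π ^ (N x) * x ∈ A := fun x => (hex x).choose_spec.1
  have hN2 : ∀ x : Kˣ, v (π ^ (N x) * x) ≤ 1 := fun x => (hex x).choose_spec.2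
  set f : Kˣ → G := fun x => ψ ⟨π ^ (N x) * x, hN1 x⟩ * p ^ (-(N x)) with hfdef
  have hf_spec : ∀ (x : Kˣ) (n : ℤ) (hn : π ^ n * x ∈ A),
      f x = ψ ⟨π ^ n * x, hn⟩ * p ^ (-n) := by
    intro x n hn
    exact keyall x (N x) n (hN1 x) hn
  -- multiplicativity
  have hmul : ∀ x y : Kˣ, f (x * y) = f x * f y := by
    intro x y
    obtain ⟨ha1, ha2⟩ := (hmemA _).1 (hN1 x)
    obtain ⟨hb1, hb2⟩ := (hmemA _).1 (hN1 y)
    have ha3 := hN2 x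
    have hb3 := hN2 y
    set n := N x
    set m := N y
    have hab : π ^ (n + m) * (x * y) = (π ^ n * x) * (π ^ m * y) := by
      rw [mul_mul_mul_comm, ← zpow_add]
    have hvab : v ((π ^ n * x) * (π ^ m * y)) = v (π ^ n * x) * v (π ^ m * y) :=
      hv_mul _ _
    by_cases hc : ε ≤ v ((π ^ n * x) * (π ^ m * y))
    · have habA : π ^ (n + m) * (x * y) ∈ A := by
        refine (hmemA _).2 ⟨?_, ?_⟩
        · rw [hab]; exact hc
        · rw [hab, hvab]
          have := hv_pos (π ^ n * x); have := hv_pos (π ^ m * y)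
          nlinarith
      rw [hf_spec (x * y) (n + m) habA, hf_spec x n (hN1 x), hf_spec y m (hN1 y)]
      have h1 : ψ ⟨π ^ (n + m) * (x * y), habA⟩
          = ψ ⟨π ^ n * x, hN1 x⟩ * ψ ⟨π ^ m * y, hN1 y⟩ := by
        rw [hψ (π ^ n * x) (π ^ m * y) (hN1 x) (hN1 y) (by rw [← hab]; exact habA)]
        exact ψc _ _ _ _ hab
      rw [h1]
      exact grp_aux1 _ _ _ n m
    · push_neg at hc
      -- use a' = π^(n-1) * x
      have hva' : v (π ^ (n - 1) * x) = ε⁻¹ * v (π ^ n * x) := by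
        rw [hvz, hvz, zpow_sub_one₀ hε0.ne']
        ring
      have ha'A : π ^ (n - 1) * x ∈ A := by
        refine (hmemA _).2 ⟨?_, ?_⟩
        · rw [hva']
          have h1 : (1:ℝ) ≤ ε⁻¹ * v (π ^ n * x) := by
            rw [← inv_mul_cancel₀ hε0.ne']
            exact mul_le_mul_of_nonneg_left ha1 (inv_pos.2 hε0).le
          linarith [hε1]
        · rw [hva']
          have := mul_le_mul_of_nonneg_left ha3 (le_of_lt (inv_pos.2 hε0))
          linarith
      have heqa : π * (π ^ (n - 1) * x) = π ^ n * x := by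
        rw [← mul_assoc, mul_comm π, ← zpow_add_one]
        norm_num
      have hab' : π ^ (n + m - 1) * (x * y) = (π ^ (n - 1) * x) * (π ^ m * y) := by
        rw [mul_mul_mul_comm, ← zpow_add]
        congr 2
        ring
      have hvab' : v ((π ^ (n - 1) * x) * (π ^ m * y))
          = ε⁻¹ * (v (π ^ n * x) * v (π ^ m * y)) := by
        rw [hv_mul, hva']; ring
      have hab'A : π ^ (n + m - 1) * (x * y) ∈ A := by
        refine (hmemA _).2 ⟨?_, ?_⟩
        · rw [hab', hvab']
          have h1 : ε * ε ≤ v (π ^ n * x) * v (π ^ m * y) := by nlinarith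
          have h2 : ε⁻¹ * (ε * ε) = ε := by field_simp
          nlinarith [inv_pos.2 hε0]
        · rw [hab', hvab']
          have h2 : ε⁻¹ * v ((π ^ n * x) * (π ^ m * y)) ≤ ε⁻¹ * ε :=
            mul_le_mul_of_nonneg_left hc.le (inv_pos.2 hε0).le
          rw [inv_mul_cancel₀ hε0.ne', hvab] at h2
          linarith [hεinv.le]
      rw [hf_spec (x * y) (n + m - 1) hab'A, hf_spec x n (hN1 x), hf_spec y m (hN1 y)]
      have hsplit : ψ ⟨π ^ n * x, hN1 x⟩ = p * ψ ⟨π ^ (n - 1) * x, ha'A⟩ := by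
        rw [hp, hψ π (π ^ (n - 1) * x) hπA ha'A (by rw [heqa]; exact hN1 x)]
        exact (ψc _ _ _ _ heqa).symm
      have h1 : ψ ⟨π ^ (n + m - 1) * (x * y), hab'A⟩
          = ψ ⟨π ^ (n - 1) * x, ha'A⟩ * ψ ⟨π ^ m * y, hN1 y⟩ := by
        rw [hψ (π ^ (n - 1) * x) (π ^ m * y) ha'A (hN1 y) (by rw [← hab']; exact hab'A)]
        exact ψc _ _ _ _ hab'
      rw [h1, hsplit]
      exact grp_aux2 _ _ _ n m
  set φ : Kˣ →* G := MonoidHom.mk' f hmul with hφdef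
  have hφspec : ∀ (x : Kˣ) (hx : x ∈ A), φ x = ψ ⟨x, hx⟩ := by
    intro x hx
    have hx0 : π ^ (0 : ℤ) * x ∈ A := by rw [zpow_zero, one_mul]; exact hx
    have h := hf_spec x 0 hx0
    have h2 : ψ ⟨π ^ (0 : ℤ) * x, hx0⟩ = ψ ⟨x, hx⟩ :=
      ψc _ _ _ _ (by rw [zpow_zero, one_mul])
    show f x = ψ ⟨x, hx⟩
    rw [h, h2]
    norm_num
  refine ⟨φ, hφspec, ?_⟩
  intro φ' hφ'
  ext x
  have hn := hN1 x
  have h2 : p ^ (N x) * φ' x = ψ ⟨π ^ (N x) * x, hn⟩ := by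
    rw [hp, ← hφ' π hπA, ← map_zpow, ← map_mul]
    exact hφ' _ hn
  have h3 : φ' x = ψ ⟨π ^ (N x) * x, hn⟩ * p ^ (-(N x)) := by
    rw [← h2, zpow_neg]
    rw [mul_comm (p ^ (N x)) (φ' x), mul_assoc, mul_inv_cancel, mul_one]
  rw [h3]
  rfl
end
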